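/- Let t, φ ∈ ℝ and let v = (cos t) • e₀ + (exp(iφ) sin t) • e₁ ∈ ℂ². With β₀ = (1/2) · sin(2t) · exp(iφ), one has ‖c v − β₀ • v‖ = sin² t, where c is the fermion annihilation operator. -/

import Mathlib

/-- For the "approximate complex fermion coherent state"
`v = cos t • e₀ + e^{iφ} sin t • e₁` and `β₀ = ½ sin(2t) e^{iφ}`,
one has `‖c v − β₀ • v‖ = sin² t`. -/
theorem norm_residual_approx_fermion_coherent_state
    (c : EuclideanSpace ℂ (Fin 2) →ₗ[ℂ] EuclideanSpace ℂ (Fin 2))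
    (hc0 : c (EuclideanSpace.single 0 1) = 0)
    (hc1 : c (EuclideanSpace.single 1 1) = EuclideanSpace.single 0 1)
    (t φ : ℝ) (v : EuclideanSpace ℂ (Fin 2))
    (hv : v = (Real.cos t : ℂ) • EuclideanSpace.single 0 1
        + (Complex.exp (φ * Complex.I) * Real.sin t) • EuclideanSpace.single 1 1)
    (β₀ : ℂ)
    (hβ₀ : β₀ = (1 / 2 : ℂ) * Real.sin (2 * t) * Complex.exp (φ * Complex.I)) :
    ‖c v - β₀ • v‖ = Real.sin t ^ 2 := by
  subst hv hβ₀
  rw [map_add, map_smul, map_smul, hc0, hc1, EuclideanSpace.norm_eq]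
  simp only [Fin.sum_univ_two, PiLp.sub_apply, PiLp.add_apply, PiLp.smul_apply,
    EuclideanSpace.single_apply, smul_eq_mul, smul_zero, Pi.zero_apply,
    Fin.isValue, zero_add, add_zero, if_true]
  have h01 : ((0:Fin 2) = 1) = False := by decide
  have h10 : ((1:Fin 2) = 0) = False := by decide
  simp only [h01, h10, if_false, mul_zero, add_zero, zero_add, mul_one, zero_sub]
  have e1 : Complex.exp (φ * Complex.I) * (Real.sin t : ℂ) -
      1 / 2 * (Real.sin (2*t) : ℂ) * Complex.exp (φ * Complex.I) * (Real.cos t : ℂ)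
      = Complex.exp (φ * Complex.I) * ((Real.sin t : ℂ) - 1/2 * (Real.sin (2*t):ℂ) * (Real.cos t:ℂ)) := by
    ring
  rw [e1]
  have habs : ‖Complex.exp (φ * Complex.I)‖ = 1 := by
    simpa using Complex.norm_exp_ofReal_mul_I φ
  rw [norm_mul, habs]
  have hc1' : ((Real.sin t : ℂ) - 1/2 * (Real.sin (2*t):ℂ) * (Real.cos t:ℂ)) =
      ((Real.sin t - 1/2 * Real.sin (2*t) * Real.cos t : ℝ) : ℂ) := by push_cast; ring
  rw [hc1', Complex.norm_real, Real.norm_eq_abs, Real.sin_two_mul]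
  have k1 : Real.sin t - 1/2 * (2 * Real.sin t * Real.cos t) * Real.cos t
      = Real.sin t * (Real.sin t)^2 := by
    linear_combination (-Real.sin t) * Real.sin_sq_add_cos_sq t
  rw [k1]
  have e2 : -(1 / 2 * ((2 * Real.sin t * Real.cos t : ℝ) : ℂ) * Complex.exp (φ * Complex.I) *
        (Complex.exp (φ * Complex.I) * (Real.sin t : ℂ)))
      = (Complex.exp (φ * Complex.I) * Complex.exp (φ * Complex.I)) *
        ((-(1/2 * (2 * Real.sin t * Real.cos t) * Real.sin t) : ℝ) : ℂ) := by
    push_cast; ring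
  rw [e2, norm_mul, norm_mul, habs, Complex.norm_real, Real.norm_eq_abs]
  have key : (1 * |Real.sin t * Real.sin t ^ 2|) ^ 2 +
      (1 * 1 * |(-(1 / 2 * (2 * Real.sin t * Real.cos t) * Real.sin t))|) ^ 2
      = (Real.sin t ^ 2) ^ 2 := by
    simp only [one_mul, sq_abs]
    linear_combination (Real.sin t ^ 4) * Real.sin_sq_add_cos_sq t
  rw [key]
  exact Real.sqrt_sq (sq_nonneg _)
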